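/- Let Y and Z_0, Z_1, …, Z_m be random variables such that for every t with 1 ≤ t ≤ m, the variable Z_t is conditionally independent of the tuple (Y, Z_0, …, Z_{t−2}) given Z_{t−1}. Then for every j with 1 ≤ j ≤ m, Y is conditionally independent of Z_j given Z_{j−1}, i.e. Y ⊥ Z_j | σ(Z_{j−1}), and consequently I[Y : Z_j | Z_{j−1}] = 0. (This is the probabilistic core of the paper's Theorem 1: once the model's reasoning path diverges from the ground-truth path at an unidentifiable step, its subsequent states Z_k, Z_{k+1}, … form a chain that Assumption 1's Bayesian network screens off from the true answer Y, so every subsequent step adds no information about Y.) -/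

import Mathlib

open MeasureTheory ProbabilityTheory

lemma constant_on_fiber {Ω T : Type*} [MeasurableSpace T]
    (W : Ω → T) {h : Ω → ℝ}
    (hh : StronglyMeasurable[MeasurableSpace.comap W inferInstance] h)
    {ω ω' : Ω} (hww : W ω = W ω') : h ω = h ω' := by
  have hm := hh.measurable
  obtain ⟨B, -, hB⟩ := hm (measurableSet_singleton (h ω))
  have hω : ω ∈ W ⁻¹' B := by rw [hB]; exact rfl
  have hω' : ω' ∈ W ⁻¹' B := by rwa [Set.mem_preimage, ← hww]
  rw [hB] at hω'
  exact (hω' : h ω' = h ω).symm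

lemma fiber_factorization
    {Ω T V U : Type*} {mΩ : MeasurableSpace Ω} [StandardBorelSpace Ω]
    [MeasurableSpace T] [MeasurableSpace U] [MeasurableSpace V]
    (μ : Measure Ω) [IsProbabilityMeasure μ]
    (W : Ω → T) (f : Ω → U) (g : Ω → V)
    (hW : Measurable W) (hf : Measurable f) (hg : Measurable g)
    (h : CondIndepFun (MeasurableSpace.comap W inferInstance) hW.comap_le f g μ)
    (A : Set U) (B : Set V) (z : T) (hA : MeasurableSet A) (hB : MeasurableSet B)
    (hz : MeasurableSet ({z} : Set T)) :
    (μ (f ⁻¹' A ∩ g ⁻¹' B ∩ W ⁻¹' {z})).toReal * (μ (W ⁻¹' {z})).toReal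
      = (μ (f ⁻¹' A ∩ W ⁻¹' {z})).toReal * (μ (g ⁻¹' B ∩ W ⁻¹' {z})).toReal := by
  have hm' : MeasurableSpace.comap W inferInstance ≤ mΩ := hW.comap_le
  set C : Set Ω := W ⁻¹' {z} with hCdef
  have hCm : MeasurableSet[MeasurableSpace.comap W inferInstance] C := ⟨{z}, hz, rfl⟩
  have hCm0 : MeasurableSet[mΩ] C := hm' _ hCm
  by_cases hC0 : μ C = 0
  · have h1 : μ (f ⁻¹' A ∩ g ⁻¹' B ∩ C) = 0 :=
      measure_mono_null Set.inter_subset_right hC0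
    have h2 : μ (f ⁻¹' A ∩ C) = 0 := measure_mono_null Set.inter_subset_right hC0
    simp [h1, h2, hC0]
  · have key := (condIndepFun_iff (MeasurableSpace.comap W inferInstance) hm' f g hf hg μ).mp
      h (f ⁻¹' A) (g ⁻¹' B) ⟨A, hA, rfl⟩ ⟨B, hB, rfl⟩
    have hgood : ∃ ω₀ ∈ C, (μ⟦f ⁻¹' A ∩ g ⁻¹' B | MeasurableSpace.comap W inferInstance⟧) ω₀
        = ((μ⟦f ⁻¹' A | MeasurableSpace.comap W inferInstance⟧)
            * (μ⟦g ⁻¹' B | MeasurableSpace.comap W inferInstance⟧)) ω₀ := by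
      by_contra hcon
      push_neg at hcon
      have hsub : C ⊆ {ω | ¬ ((μ⟦f ⁻¹' A ∩ g ⁻¹' B | MeasurableSpace.comap W inferInstance⟧) ω
          = ((μ⟦f ⁻¹' A | MeasurableSpace.comap W inferInstance⟧)
              * (μ⟦g ⁻¹' B | MeasurableSpace.comap W inferInstance⟧)) ω)} :=
        fun ω hω => hcon ω hω
      exact hC0 (measure_mono_null hsub key)
    obtain ⟨ω₀, hω₀C, hω₀⟩ := hgood
    have hint : ∀ (s : Set Ω), MeasurableSet[mΩ] s →
        (μ⟦s | MeasurableSpace.comap W inferInstance⟧) ω₀ * (μ C).toReal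
          = (μ (s ∩ C)).toReal := by
      intro s hs
      have hInt : Integrable (s.indicator fun _ => (1:ℝ)) μ :=
        (integrable_const (1:ℝ)).indicator hs
      have h1 : ∫ x in C, (μ⟦s | MeasurableSpace.comap W inferInstance⟧) x ∂μ
          = ∫ x in C, s.indicator (fun _ => (1:ℝ)) x ∂μ :=
        setIntegral_condExp hm' hInt hCm
      have h2 : ∫ x in C, s.indicator (fun _ => (1:ℝ)) x ∂μ = (μ (C ∩ s)).toReal := by
        rw [setIntegral_indicator hs]
        simp [integral_const, Measure.real]
      have hconst : ∀ x ∈ C, (μ⟦s | MeasurableSpace.comap W inferInstance⟧) x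
          = (μ⟦s | MeasurableSpace.comap W inferInstance⟧) ω₀ := by
        intro x hx
        refine constant_on_fiber W stronglyMeasurable_condExp ?_
        have hx' : W x = z := hx
        have h' : W ω₀ = z := hω₀C
        rw [hx', h']
      have h3 : ∫ x in C, (μ⟦s | MeasurableSpace.comap W inferInstance⟧) x ∂μ
          = (μ C).toReal * (μ⟦s | MeasurableSpace.comap W inferInstance⟧) ω₀ := by
        rw [setIntegral_congr_fun hCm0 hconst]
        simp [integral_const, smul_eq_mul, Measure.real]
      have h4 := h3.symm.trans (h1.trans h2)
      rw [Set.inter_comm s C, ← h4, mul_comm]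
    have e1 := hint (f ⁻¹' A ∩ g ⁻¹' B) ((hf hA).inter (hg hB))
    have e2 := hint (f ⁻¹' A) (hf hA)
    have e3 := hint (g ⁻¹' B) (hg hB)
    have e4 : (μ⟦f ⁻¹' A ∩ g ⁻¹' B | MeasurableSpace.comap W inferInstance⟧) ω₀
        = (μ⟦f ⁻¹' A | MeasurableSpace.comap W inferInstance⟧) ω₀
            * (μ⟦g ⁻¹' B | MeasurableSpace.comap W inferInstance⟧) ω₀ := hω₀
    rw [← e1, ← e2, ← e3, e4]
    ring

/-- Conditional entropy `H[Y | X] = -E[log p(Y | X)]` for finite-valued random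
variables, written out as a sum over the joint probability mass function. -/
noncomputable def condEntropy' {Ω S U : Type*} [MeasurableSpace Ω]
    [MeasurableSpace S] [MeasurableSpace U] [Fintype S] [Fintype U]
    (μ : Measure Ω) (Y : Ω → U) (X : Ω → S) : ℝ :=
  -∑ x : S, ∑ y : U,
    (μ (X ⁻¹' {x} ∩ Y ⁻¹' {y})).toReal *
      Real.log ((μ (X ⁻¹' {x} ∩ Y ⁻¹' {y})).toReal / (μ (X ⁻¹' {x})).toReal)

/-- Conditional mutual information `I[Y : X | Z] = H[Y | Z] - H[Y | (X, Z)]`. -/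
noncomputable def condMutualInfo' {Ω S T U : Type*} [MeasurableSpace Ω]
    [MeasurableSpace S] [MeasurableSpace T] [MeasurableSpace U]
    [Fintype S] [Fintype T] [Fintype U]
    (μ : Measure Ω) (Y : Ω → U) (X : Ω → S) (Z : Ω → T) : ℝ :=
  condEntropy' μ Y Z - condEntropy' μ Y (fun ω => (X ω, Z ω))

/-- Theorem 1 (probabilistic core): if each `Z t` (for `1 ≤ t ≤ m`) is
conditionally independent of the tuple `(Y, Z 0, …, Z (t-2))` given `Z (t-1)`,
then for every `1 ≤ j ≤ m` we have `Y ⊥ Z j | σ(Z (j-1))`, and hence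
`I[Y : Z j | Z (j-1)] = 0`. -/
theorem markov_chain_screens_off
    {Ω U : Type*} {mΩ : MeasurableSpace Ω} [StandardBorelSpace Ω]
    {S : ℕ → Type*} [∀ i, MeasurableSpace (S i)] [∀ i, Fintype (S i)]
    [∀ i, Nonempty (S i)] [∀ i, MeasurableSingletonClass (S i)]
    [MeasurableSpace U] [Fintype U] [Nonempty U] [MeasurableSingletonClass U]
    (μ : Measure Ω) [IsProbabilityMeasure μ]
    (m : ℕ) (Y : Ω → U) (Z : ∀ i, Ω → S i)
    (hY : Measurable Y) (hZ : ∀ i, Measurable (Z i))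
    (hchain : ∀ t : ℕ, 1 ≤ t → t ≤ m →
      CondIndepFun (MeasurableSpace.comap (Z (t - 1)) inferInstance)
        ((hZ (t - 1)).comap_le)
        (Z t) (fun ω => (Y ω, fun i : Fin (t - 1) => Z i ω)) μ) :
    ∀ j : ℕ, 1 ≤ j → j ≤ m →
      CondIndepFun (MeasurableSpace.comap (Z (j - 1)) inferInstance)
        ((hZ (j - 1)).comap_le) Y (Z j) μ ∧
      condMutualInfo' μ Y (Z j) (Z (j - 1)) = 0 := by
  intro j hj1 hjm
  have ci0 := hchain j hj1 hjm
  have ciYZ : CondIndepFun (MeasurableSpace.comap (Z (j - 1)) inferInstance)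
      ((hZ (j - 1)).comap_le) Y (Z j) μ := by
    have h2 := ci0.comp (measurable_id (α := S j))
      (measurable_fst (α := U) (β := ∀ i : Fin (j - 1), S i))
    exact Kernel.IndepFun.symm h2
  refine ⟨ciYZ, ?_⟩
  -- notation
  set W : Ω → S (j - 1) := Z (j - 1) with hWdef
  set X : Ω → S j := Z j with hXdef
  have hW : Measurable W := hZ (j - 1)
  have hX : Measurable X := hZ j
  -- factorization
  have fact : ∀ (y : U) (s : S j) (z : S (j - 1)),
      (μ (Y ⁻¹' {y} ∩ X ⁻¹' {s} ∩ W ⁻¹' {z})).toReal * (μ (W ⁻¹' {z})).toReal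
        = (μ (Y ⁻¹' {y} ∩ W ⁻¹' {z})).toReal * (μ (X ⁻¹' {s} ∩ W ⁻¹' {z})).toReal :=
    fun y s z => fiber_factorization μ W Y X hW hY hX ciYZ {y} {s} z
      (measurableSet_singleton y) (measurableSet_singleton s) (measurableSet_singleton z)
  -- partition over s
  have hpart : ∀ (z : S (j - 1)) (y : U),
      ∑ s : S j, (μ (X ⁻¹' {s} ∩ W ⁻¹' {z} ∩ Y ⁻¹' {y})).toReal
        = (μ (W ⁻¹' {z} ∩ Y ⁻¹' {y})).toReal := by
    intro z y
    rw [← ENNReal.toReal_sum (fun s _ => measure_ne_top μ _)]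
    congr 1
    have hU : (⋃ s : S j, (X ⁻¹' {s} ∩ (W ⁻¹' {z} ∩ Y ⁻¹' {y})))
        = W ⁻¹' {z} ∩ Y ⁻¹' {y} := by
      ext ω; simp
    have hmeas : ∀ s : S j, MeasurableSet (X ⁻¹' {s} ∩ (W ⁻¹' {z} ∩ Y ⁻¹' {y})) :=
      fun s => (hX (measurableSet_singleton s)).inter
        ((hW (measurableSet_singleton z)).inter (hY (measurableSet_singleton y)))
    have hdisj : Pairwise (Function.onFun Disjoint
        fun s : S j => X ⁻¹' {s} ∩ (W ⁻¹' {z} ∩ Y ⁻¹' {y})) := by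
      intro s s' hss'
      refine Set.disjoint_left.mpr ?_
      rintro ω ⟨hs, -⟩ ⟨hs', -⟩
      exact hss' (hs.symm.trans hs')
    calc ∑ s : S j, μ (X ⁻¹' {s} ∩ W ⁻¹' {z} ∩ Y ⁻¹' {y})
        = ∑ s : S j, μ (X ⁻¹' {s} ∩ (W ⁻¹' {z} ∩ Y ⁻¹' {y})) := by
          simp [Set.inter_assoc]
      _ = μ (⋃ s : S j, (X ⁻¹' {s} ∩ (W ⁻¹' {z} ∩ Y ⁻¹' {y}))) := by
          rw [measure_iUnion hdisj hmeas, tsum_fintype]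
      _ = μ (W ⁻¹' {z} ∩ Y ⁻¹' {y}) := by rw [hU]
  -- main computation
  have hH : condEntropy' μ Y (fun ω => (X ω, W ω)) = condEntropy' μ Y W := by
    unfold condEntropy'
    congr 1
    rw [Fintype.sum_prod_type]
    have hpre : ∀ (s : S j) (z : S (j - 1)),
        ((fun ω => (X ω, W ω)) ⁻¹' {(s, z)}) = X ⁻¹' {s} ∩ W ⁻¹' {z} := by
      intro s z; ext ω; simp [Prod.ext_iff]
    refine Finset.sum_comm.trans ?_
    refine Finset.sum_congr rfl (fun z _ => ?_)
    rw [Finset.sum_comm]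
    refine Finset.sum_congr rfl (fun y _ => ?_)
    -- per (z, y): sum over s
    set q : ℝ := (μ (W ⁻¹' {z} ∩ Y ⁻¹' {y})).toReal with hq
    set p : ℝ := (μ (W ⁻¹' {z})).toReal with hp
    have hterm : ∀ s : S j,
        (μ (((fun ω => (X ω, W ω)) ⁻¹' {(s, z)}) ∩ Y ⁻¹' {y})).toReal *
          Real.log ((μ (((fun ω => (X ω, W ω)) ⁻¹' {(s, z)}) ∩ Y ⁻¹' {y})).toReal /
            (μ ((fun ω => (X ω, W ω)) ⁻¹' {(s, z)})).toReal)
        = (μ (X ⁻¹' {s} ∩ W ⁻¹' {z} ∩ Y ⁻¹' {y})).toReal * Real.log (q / p) := by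
      intro s
      rw [hpre s z]
      set t : ℝ := (μ (X ⁻¹' {s} ∩ W ⁻¹' {z} ∩ Y ⁻¹' {y})).toReal with ht
      set r : ℝ := (μ (X ⁻¹' {s} ∩ W ⁻¹' {z})).toReal with hr
      by_cases ht0 : t = 0
      · rw [ht0]; ring
      · have htpos : 0 < t := lt_of_le_of_ne ENNReal.toReal_nonneg (Ne.symm ht0)
        have htr : t ≤ r := ENNReal.toReal_mono (measure_ne_top μ _)
          (measure_mono Set.inter_subset_left)
        have htq : t ≤ q := ENNReal.toReal_mono (measure_ne_top μ _)
          (measure_mono (by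
            intro ω hω
            exact ⟨hω.1.2, hω.2⟩))
        have hqp : q ≤ p := ENNReal.toReal_mono (measure_ne_top μ _)
          (measure_mono Set.inter_subset_left)
        have hfact : t * p = q * r := by
          have := fact y s z
          have hsets : Y ⁻¹' {y} ∩ X ⁻¹' {s} ∩ W ⁻¹' {z}
              = X ⁻¹' {s} ∩ W ⁻¹' {z} ∩ Y ⁻¹' {y} := by
            ext ω; simp only [Set.mem_inter_iff]; tauto
          have hsets2 : Y ⁻¹' {y} ∩ W ⁻¹' {z} = W ⁻¹' {z} ∩ Y ⁻¹' {y} :=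
            Set.inter_comm _ _
          rw [hsets, hsets2] at this
          linarith [this]
        have hratio : t / r = q / p := by
          rw [div_eq_div_iff (ne_of_gt (lt_of_lt_of_le htpos htr)) (ne_of_gt (lt_of_lt_of_le (lt_of_lt_of_le htpos htq) hqp))]
          linarith [hfact]
        rw [hratio]
    rw [Finset.sum_congr rfl (fun s _ => hterm s), ← Finset.sum_mul, hpart z y]
  unfold condMutualInfo'
  rw [hH]
  ring
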